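/- In ℚ[y₁,…,y₄], neither the polynomial y₁⁴+y₂⁴+y₃⁴+y₄⁴ nor the polynomial 91·Σ_{i=1}^4 y_i⁴ + 166·Σ_{1≤i<j≤4} y_i² y_j² belongs to the ideal generated by y₁²+y₂²+y₃²+y₄². -/

import Mathlib

open MvPolynomial

lemma aux_aeval_not_mem (f : MvPolynomial (Fin 4) ℚ)
    (h : aeval (![1, Complex.I, 0, 0] : Fin 4 → ℂ) f ≠ 0) :
    f ∉ Ideal.span {(∑ i : Fin 4, X i ^ 2 : MvPolynomial (Fin 4) ℚ)} := by
  intro hf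
  rw [Ideal.mem_span_singleton] at hf
  obtain ⟨g, rfl⟩ := hf
  apply h
  rw [map_mul]
  have : aeval (![1, Complex.I, 0, 0] : Fin 4 → ℂ)
      (∑ i : Fin 4, X i ^ 2 : MvPolynomial (Fin 4) ℚ) = 0 := by
    simp [Fin.sum_univ_four, Complex.I_sq]
  rw [this, zero_mul]

/-- In `ℚ[y₁,…,y₄]`, neither `Σ yᵢ⁴` nor `91·Σ yᵢ⁴ + 166·Σ_{i<j} yᵢ²yⱼ²` belongs
to the ideal generated by `y₁²+y₂²+y₃²+y₄²`. -/
theorem not_mem_span_sum_squares_E6 :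
    ((∑ i : Fin 4, X i ^ 4 : MvPolynomial (Fin 4) ℚ)
        ∉ Ideal.span {(∑ i : Fin 4, X i ^ 2 : MvPolynomial (Fin 4) ℚ)})
    ∧ ((C (91 : ℚ) * (∑ i : Fin 4, X i ^ 4)
        + C (166 : ℚ) * ∑ i : Fin 4, ∑ j ∈ Finset.Ioi i, X i ^ 2 * X j ^ 2)
        ∉ Ideal.span {(∑ i : Fin 4, X i ^ 2 : MvPolynomial (Fin 4) ℚ)}) := by
  constructor
  · apply aux_aeval_not_mem
    have : Complex.I ^ 4 = 1 := by
      rw [show (4:ℕ) = 2*2 from rfl, pow_mul, Complex.I_sq]; norm_num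
    simp [Fin.sum_univ_four, this]
  · apply aux_aeval_not_mem
    have h4 : Complex.I ^ 4 = 1 := by
      rw [show (4:ℕ) = 2*2 from rfl, pow_mul, Complex.I_sq]; norm_num
    simp only [map_add, map_mul, map_sum, map_pow, aeval_C, aeval_X]
    simp only [Fin.sum_univ_four]
    rw [show Finset.Ioi (0 : Fin 4) = {1, 2, 3} from by decide,
      show Finset.Ioi (1 : Fin 4) = {2, 3} from by decide,
      show Finset.Ioi (2 : Fin 4) = {3} from by decide,
      show Finset.Ioi (3 : Fin 4) = ∅ from by decide]
    rw [Finset.sum_insert (by decide), Finset.sum_insert (by decide),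
      Finset.sum_insert (by decide)]
    have e2 : (![1, Complex.I, 0, 0] : Fin 4 → ℂ) 2 = 0 := rfl
    have e3 : (![1, Complex.I, 0, 0] : Fin 4 → ℂ) 3 = 0 := rfl
    norm_num [Complex.I_sq, h4, e2, e3]
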